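/- arXiv:1009.2126 — 5 statements merged into one kernel-verified Lean document; each statement's English description precedes it below -/
import Mathlib

section
/- Let A be a commutative Noetherian ring and M a finitely generated A-module. Suppose f : M → M is an A-linear endomorphism such that for every prime ideal p of A, the localization satisfies f(M)_p ⊆ p·M_p. Then f is nilpotent, i.e., there exists n ≥ 1 with f^n = 0. -/
open LocalizedModule in
/-- If the image of `x` in the localized module lies in `I.map • ⊤`, then some `s ∈ S`
multiplies `x` into `I • ⊤` already in `M`. -/
lemma exists_smul_mem_of_mk_mem_map_smul_top
    {A : Type*} [CommRing A] {M : Type*} [AddCommGroup M] [Module A M]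
    (I : Ideal A) (S : Submonoid A) (x : M)
    (hx : LocalizedModule.mkLinearMap S M x ∈
      (I.map (algebraMap A (Localization S))) •
        (⊤ : Submodule (Localization S) (LocalizedModule S M))) :
    ∃ s : S, (s : A) • x ∈ I • (⊤ : Submodule A M) := by
  have hle : (I.map (algebraMap A (Localization S))) •
      (⊤ : Submodule (Localization S) (LocalizedModule S M)) ≤
      (I • (⊤ : Submodule A M)).localized' (Localization S) S (mkLinearMap S M) := by
    refine Submodule.smul_le.mpr ?_
    intro r hr n _
    have hr' : r ∈ Ideal.span ((algebraMap A (Localization S)) '' I) := hr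
    clear hr
    induction hr' using Submodule.span_induction generalizing n with
    | mem r hmem =>
        obtain ⟨a, ha, rfl⟩ := hmem
        induction n using LocalizedModule.induction_on with
        | _ m s =>
          rw [algebraMap_smul, LocalizedModule.smul'_mk]
          exact (Submodule.mem_localized' _ _ _ _ _).mpr
            ⟨a • m, Submodule.smul_mem_smul ha Submodule.mem_top, s,
              (IsLocalizedModule.mk_eq_mk' s (a • m)).symm⟩
    | zero => simp
    | add r1 r2 _ _ ih1 ih2 => rw [add_smul]; exact Submodule.add_mem _ (ih1 n Submodule.mem_top) (ih2 n Submodule.mem_top)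
    | smul c r _ ih => rw [smul_eq_mul, mul_smul]; exact Submodule.smul_mem _ c (ih n Submodule.mem_top)
  have hmem := hle hx
  rw [Submodule.mem_localized'] at hmem
  obtain ⟨z, hz, s, hmk⟩ := hmem
  rw [← IsLocalizedModule.mk_eq_mk', LocalizedModule.mkLinearMap_apply] at hmk
  have hmm : LocalizedModule.mk z s = LocalizedModule.mk x 1 := hmk
  rw [LocalizedModule.mk_eq] at hmm
  obtain ⟨u, hu⟩ := hmm
  refine ⟨u * s, ?_⟩
  have h1 : (u : A) • z ∈ I • (⊤ : Submodule A M) := Submodule.smul_mem _ _ hz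
  have h2 : ((u * s : S) : A) • x = (u : A) • z := by
    simp only [Submonoid.smul_def, one_smul] at hu
    rw [Submonoid.coe_mul, mul_smul, ← hu]
  rwa [h2]

/-- If `A` is a commutative Noetherian ring, `M` a finitely generated `A`-module, and
`f : M → M` an `A`-linear endomorphism such that for every prime ideal `p` of `A` the
image of `f(M)` in the localization `M_p` lies in `p · M_p`, then `f` is nilpotent. -/
theorem nilpotent_of_image_in_prime_localizations
    (A : Type*) [CommRing A] [IsNoetherianRing A]
    (M : Type*) [AddCommGroup M] [Module A M] [Module.Finite A M]
    (f : M →ₗ[A] M)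
    (h : ∀ (p : Ideal A) [p.IsPrime],
      ∀ x ∈ LinearMap.range f,
        (LocalizedModule.mkLinearMap p.primeCompl M) x ∈
          (p.map (algebraMap A (Localization p.primeCompl))) •
            (⊤ : Submodule (Localization p.primeCompl)
              (LocalizedModule p.primeCompl M))) :
    ∃ n : ℕ, 1 ≤ n ∧ f ^ n = 0 := by
  classical
  -- Regard `M` as a module over `A[X]`, with `X` acting by `f`.
  have hX : (Polynomial.X : Polynomial A) ∈
      (Module.annihilator (Polynomial A) (Module.AEval' f)).radical := by
    rw [Ideal.radical_eq_sInf, Ideal.mem_sInf]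
    rintro q ⟨hle, hq⟩
    haveI := hq
    by_contra hXq
    -- `q` is a prime of `A[X]` containing the annihilator, and `X ∉ q`.
    set Rq := Localization q.primeCompl with hRq
    set Nq := LocalizedModule q.primeCompl (Module.AEval' f) with hNq
    haveI hfin : Module.Finite Rq Nq :=
      Module.Finite.of_isLocalizedModule q.primeCompl
        (LocalizedModule.mkLinearMap q.primeCompl (Module.AEval' f))
    set q' : Ideal Rq := q.map (algebraMap (Polynomial A) Rq) with hq'
    set p : Ideal A := q.comap (algebraMap A (Polynomial A)) with hp
    haveI hpprime : p.IsPrime := Ideal.IsPrime.comap _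
    -- units of `Rq` can be cancelled from membership in submodules
    have cancel : ∀ {c : Rq}, IsUnit c → ∀ x : Nq,
        c • x ∈ q' • (⊤ : Submodule Rq Nq) → x ∈ q' • (⊤ : Submodule Rq Nq) := by
      intro c hc x hx
      have := Submodule.smul_mem (q' • (⊤ : Submodule Rq Nq)) (↑hc.unit⁻¹) hx
      rwa [smul_smul, IsUnit.val_inv_mul, one_smul] at this
    -- Key claim: elements of `p • ⊤ ⊆ M` map into `q' • ⊤` in `Nq`.
    have claimC : ∀ z ∈ (p • ⊤ : Submodule A M),
        LocalizedModule.mkLinearMap q.primeCompl (Module.AEval' f)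
          (Module.AEval'.of f z) ∈ q' • (⊤ : Submodule Rq Nq) := by
      intro z hz
      refine Submodule.smul_induction_on
        (p := fun z => (LocalizedModule.mkLinearMap q.primeCompl (Module.AEval' f))
          ((Module.AEval'.of f) z) ∈ q' • (⊤ : Submodule Rq Nq)) hz ?_ ?_
      · intro a ha x _
        have hCa : (algebraMap A (Polynomial A)) a ∈ q := ha
        have heq : (Module.AEval'.of f) (a • x) =
            (algebraMap A (Polynomial A) a) • (Module.AEval'.of f x) := by
          rw [Polynomial.algebraMap_eq, Module.AEval.C_smul, map_smul]
        rw [heq, map_smul, ← algebraMap_smul Rq]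
        exact Submodule.smul_mem_smul (Ideal.mem_map_of_mem _ hCa) Submodule.mem_top
      · intro z1 z2 h1 h2
        rw [map_add, map_add]; exact Submodule.add_mem _ h1 h2
    -- Every `mk (of (f m)) 1` lies in `q' • ⊤`.
    have claimD : ∀ m : M,
        LocalizedModule.mkLinearMap q.primeCompl (Module.AEval' f)
          (Module.AEval'.of f (f m)) ∈ q' • (⊤ : Submodule Rq Nq) := by
      intro m
      obtain ⟨t, ht⟩ := exists_smul_mem_of_mk_mem_map_smul_top p p.primeCompl (f m)
        (h p (f m) ⟨m, rfl⟩)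
      have htq : (algebraMap A (Polynomial A)) (t : A) ∈ q.primeCompl := t.2
      have hu : IsUnit (algebraMap (Polynomial A) Rq
          ((algebraMap A (Polynomial A)) (t : A))) :=
        IsLocalization.map_units Rq ⟨_, htq⟩
      refine cancel hu _ ?_
      rw [algebraMap_smul, ← map_smul]
      have h3 : (algebraMap A (Polynomial A) (t : A)) • (Module.AEval'.of f (f m)) =
          Module.AEval'.of f ((t : A) • f m) := by
        rw [Polynomial.algebraMap_eq, Module.AEval.C_smul, map_smul]
      rw [h3]
      exact claimC _ ht
    -- All of `Nq` lies in `q' • ⊤`.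
    have htop : (⊤ : Submodule Rq Nq) ≤ q' • (⊤ : Submodule Rq Nq) := by
      rintro y -
      induction y using LocalizedModule.induction_on with
      | _ n s =>
        have h1 : (LocalizedModule.mk n s : Nq) =
            Localization.mk 1 s • LocalizedModule.mk n 1 := by
          rw [LocalizedModule.mk_smul_mk, one_smul, mul_one]
        rw [h1]
        refine Submodule.smul_mem _ _ ?_
        have hXu : IsUnit (algebraMap (Polynomial A) Rq Polynomial.X) :=
          IsLocalization.map_units (M := q.primeCompl) Rq ⟨Polynomial.X, hXq⟩
        refine cancel hXu _ ?_
        rw [algebraMap_smul, LocalizedModule.smul'_mk]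
        have hn : (Polynomial.X : Polynomial A) • n =
            Module.AEval'.of f (f ((Module.AEval'.of f).symm n)) := by
          conv_lhs => rw [← (Module.AEval'.of f).apply_symm_apply n]
          rw [Module.AEval'.X_smul_of]
        rw [hn]
        exact claimD _
    -- Nakayama: the localized module vanishes.
    have hbot : (⊤ : Submodule Rq Nq) = ⊥ := by
      refine Submodule.eq_bot_of_le_smul_of_le_jacobson_bot q' ⊤
        (Module.Finite.fg_top (R := Rq) (M := Nq)) htop ?_
      rw [hq', Localization.AtPrime.map_eq_maximalIdeal]
      exact IsLocalRing.maximalIdeal_le_jacobson ⊥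
    have hsub : Subsingleton Nq := by
      refine subsingleton_of_forall_eq 0 fun x => ?_
      have : x ∈ (⊥ : Submodule Rq Nq) := hbot ▸ Submodule.mem_top
      simpa using this
    -- But `q` is in the support of the module, contradiction.
    have hQ : (⟨q, hq⟩ : PrimeSpectrum (Polynomial A)) ∈
        Module.support (Polynomial A) (Module.AEval' f) := by
      rw [Module.support_eq_zeroLocus, PrimeSpectrum.mem_zeroLocus]
      exact hle
    have := Module.mem_support_iff.mp hQ
    exact (not_subsingleton_iff_nontrivial.mpr this) hsub
  obtain ⟨n, hn⟩ := Ideal.mem_radical_iff.mp hX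
  rw [Module.AEval.annihilator_eq_ker_aeval, RingHom.mem_ker, map_pow,
    Polynomial.aeval_X] at hn
  exact ⟨n + 1, Nat.le_add_left 1 n, by rw [pow_succ, hn, zero_mul]⟩
end

section
/- Let L be an algebraically closed field, V a finite-dimensional L-vector space of dimension n ≥ 1, and φ, ψ ∈ GL(V) linear automorphisms satisfying ψ ∘ φ ∘ ψ⁻¹ = φ^q for some integer q ≥ 2. Then every eigenvalue λ of φ satisfies λ^{q^m} = λ for some integer m with 1 ≤ m ≤ n; in particular every eigenvalue of φ is a root of unity. -/
/-- Auxiliary: cancellation along iterates of an injective self-map of a set. -/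
lemma aux_iterate_cancel {α : Type*} {f : α → α} {S : Set α}
    (hmapsTo : Set.MapsTo f S S) (hinj : Set.InjOn f S) {x : α} (hx : x ∈ S)
    {i j : ℕ} (hij : i < j) (h : f^[i] x = f^[j] x) : f^[j - i] x = x := by
  have h' : f^[i] (f^[j - i] x) = f^[i] x := by
    rw [← Function.iterate_add_apply]
    have : i + (j - i) = j := by omega
    rw [this, h]
  exact (hinj.iterate hmapsTo i) (hmapsTo.iterate (j - i) hx) hx h'

/-- If `V` is an `n`-dimensional vector space (`n ≥ 1`) over an algebraically closed
field `L`, and `φ, ψ` are automorphisms of `V` with `ψ ∘ φ ∘ ψ⁻¹ = φ^q` for some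
integer `q ≥ 2`, then every eigenvalue `λ` of `φ` satisfies `λ^(q^m) = λ` for some
`1 ≤ m ≤ n`; in particular every eigenvalue of `φ` is a root of unity. -/
theorem eigenvalues_are_roots_of_unity_of_conj_pow
    (L : Type*) [Field L] [IsAlgClosed L]
    (V : Type*) [AddCommGroup V] [Module L V] [FiniteDimensional L V]
    (n : ℕ) (hn : Module.finrank L V = n) (hn1 : 1 ≤ n)
    (φ ψ : V ≃ₗ[L] V) (q : ℕ) (hq : 2 ≤ q)
    (hconj : ψ * φ * ψ⁻¹ = φ ^ q)
    (lam : L) (hlam : Module.End.HasEigenvalue (φ : V →ₗ[L] V) lam) :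
    (∃ m : ℕ, 1 ≤ m ∧ m ≤ n ∧ lam ^ (q ^ m) = lam) ∧
      (∃ k : ℕ, 1 ≤ k ∧ lam ^ k = 1) := by
  classical
  set F : MonoidHom (V ≃ₗ[L] V) (Module.End L V) :=
    LinearEquiv.automorphismGroup.toLinearMapMonoidHom (R := L) (M := V) with hF
  have hFcoe : ∀ e : V ≃ₗ[L] V, F e = (e : V →ₗ[L] V) := fun e => rfl
  set u : (Module.End L V)ˣ := F.toHomUnits ψ with hu
  set S : Set L := spectrum L (φ : V →ₗ[L] V) with hS
  -- the spectrum is mapped onto itself by `x ↦ x ^ q`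
  have hmap : (fun x : L => x ^ q) '' S = S := by
    have h1 : spectrum L ((φ : V →ₗ[L] V) ^ q) = (fun x : L => x ^ q) '' S :=
      spectrum.map_pow_of_pos _ (by omega)
    have h2 : (↑u * (φ : V →ₗ[L] V) * ↑u⁻¹ : Module.End L V) = (φ : V →ₗ[L] V) ^ q := by
      have hinv : (↑u⁻¹ : Module.End L V) = F ψ⁻¹ := by
        rw [hu, ← map_inv F.toHomUnits]; rfl
      rw [hinv]
      have hc := congrArg F hconj
      simp only [map_mul, map_pow] at hc
      exact hc
    rw [← h1, ← h2, spectrum.units_conjugate]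
  have hmapsTo : Set.MapsTo (fun x : L => x ^ q) S S := by
    intro x hx
    rw [← hmap]
    exact Set.mem_image_of_mem _ hx
  have hfin : S.Finite := Module.End.finite_spectrum _
  have hinj : Set.InjOn (fun x : L => x ^ q) S :=
    ((hfin.surjOn_iff_bijOn_of_mapsTo hmapsTo).mp hmap.symm.subset).injOn
  have hlamS : lam ∈ S := Module.End.hasEigenvalue_iff_mem_spectrum.mp hlam
  -- iterates of the map are powers
  have hiter : ∀ (m : ℕ) (x : L), (fun y : L => y ^ q)^[m] x = x ^ (q ^ m) := by
    intro m
    induction m with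
    | zero => intro x; simp
    | succ m ih =>
      intro x
      rw [Function.iterate_succ_apply', ih, pow_succ, pow_mul]
  -- bound the cardinality of the spectrum by `n`
  have : Finite S := hfin
  have hfS : Fintype S := hfin.fintype
  have hcard : Fintype.card S ≤ n := by
    choose v hv using fun μ : S =>
      (Module.End.hasEigenvalue_iff_mem_spectrum.mpr μ.2).exists_hasEigenvector
    have hli : LinearIndependent L v :=
      Module.End.eigenvectors_linearIndependent (φ : V →ₗ[L] V) S v hv
    simpa [hn] using hli.fintype_card_le_finrank
  -- pigeonhole on the orbit of `lam`
  set g : Fin (n + 1) → S := fun i => ⟨(fun y : L => y ^ q)^[i] lam, hmapsTo.iterate i hlamS⟩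
    with hg
  have hnotinj : ¬ Function.Injective g := by
    intro h
    have := Fintype.card_le_of_injective g h
    simp only [Fintype.card_fin] at this
    omega
  rw [Function.not_injective_iff] at hnotinj
  obtain ⟨i, j, hij, hne⟩ := hnotinj
  have hval : (fun y : L => y ^ q)^[(i : ℕ)] lam = (fun y : L => y ^ q)^[(j : ℕ)] lam :=
    congrArg Subtype.val hij
  have main : ∃ m : ℕ, 1 ≤ m ∧ m ≤ n ∧ lam ^ (q ^ m) = lam := by
    rcases hne.lt_or_gt with hlt | hlt
    · have hlt' : (i : ℕ) < (j : ℕ) := hlt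
      have := aux_iterate_cancel hmapsTo hinj hlamS hlt' hval
      rw [hiter] at this
      exact ⟨(j : ℕ) - i, by omega, by have := j.2; omega, this⟩
    · have hlt' : (j : ℕ) < (i : ℕ) := hlt
      have := aux_iterate_cancel hmapsTo hinj hlamS hlt' hval.symm
      rw [hiter] at this
      exact ⟨(i : ℕ) - j, by omega, by have := i.2; omega, this⟩
  obtain ⟨m, hm1, hm2, hcancel⟩ := main
  have hlamne : lam ≠ 0 := by
    intro h0
    have hunit : IsUnit (φ : V →ₗ[L] V) := by
      rw [← hFcoe φ]
      exact (Group.isUnit φ).map F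
    have hz := spectrum.zero_notMem_iff (R := L) |>.mpr hunit
    rw [h0] at hlamS
    exact hz hlamS
  refine ⟨⟨m, hm1, hm2, hcancel⟩, ⟨q ^ m - 1, ?_, ?_⟩⟩
  · have h2 : 1 < q ^ m := Nat.one_lt_pow (by omega) (by omega)
    omega
  · have hq1 : 1 ≤ q ^ m := Nat.one_le_pow _ _ (by omega)
    have hmul : lam ^ (q ^ m - 1) * lam = lam := by
      rw [← pow_succ, Nat.sub_add_cancel hq1, hcancel]
    have := mul_right_cancel₀ hlamne (hmul.trans (one_mul lam).symm)
    exact this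
end

section
/- Let L be a field, q ≥ 2 an integer, and d(x) ∈ L[x] a monic polynomial with d(0) ≠ 0 such that d(x) divides d(x^q) in L[x]. Then there exist positive integers N and N' such that d(x) divides (x^N − 1)^{N'} in L[x]. Moreover one can take N' = deg d. -/
open Polynomial

/-- If `d ∈ L[x]` is monic with `d(0) ≠ 0` and `d(x) ∣ d(x^q)` for some `q ≥ 2`, then
`d(x) ∣ (x^N − 1)^N'` for some positive integers `N, N'`; moreover one can take
`N' = deg d`. -/
theorem monic_dvd_pow_sub_one_pow_of_dvd_comp
    (L : Type*) [Field L] (q : ℕ) (hq : 2 ≤ q)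
    (d : L[X]) (hmonic : d.Monic) (h0 : d.eval 0 ≠ 0)
    (hdvd : d ∣ d.comp (X ^ q)) :
    (∃ N N' : ℕ, 0 < N ∧ 0 < N' ∧ d ∣ (X ^ N - 1) ^ N') ∧
      (∃ N : ℕ, 0 < N ∧ d ∣ (X ^ N - 1) ^ d.natDegree) := by
  classical
  suffices h : ∃ N : ℕ, 0 < N ∧ d ∣ (X ^ N - 1) ^ d.natDegree by
    refine ⟨?_, h⟩
    obtain ⟨N, hN, hdv⟩ := h
    rcases Nat.eq_zero_or_pos d.natDegree with h0d | h0d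
    · refine ⟨1, 1, one_pos, one_pos, ?_⟩
      have hd1 : d = 1 := hmonic.natDegree_eq_zero.mp h0d
      simp [hd1]
    · exact ⟨N, d.natDegree, hN, h0d, hdv⟩
  set K := AlgebraicClosure L
  set f : L →+* K := algebraMap L K with hf
  have hinj : Function.Injective f := f.injective
  set dK := d.map f with hdKdef
  have hdKmonic : dK.Monic := hmonic.map f
  have hdK0 : dK ≠ 0 := hdKmonic.ne_zero
  have hsplit : Splits dK := IsAlgClosed.splits dK
  -- roots are nonzero
  have hnz : ∀ μ ∈ dK.roots, μ ≠ 0 := by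
    intro μ hμ hμ0
    have hroot : dK.eval 0 = 0 := by
      have := (mem_roots hdK0).mp hμ
      simpa [hμ0] using this
    rw [hdKdef, eval_zero_map] at hroot
    exact h0 (hinj (by simpa using hroot))
  -- root set stable under μ ↦ μ^q
  have hstab : ∀ μ ∈ dK.roots, μ ^ q ∈ dK.roots := by
    intro μ hμ
    have hμ0 : dK.eval μ = 0 := (mem_roots hdK0).mp hμ
    obtain ⟨c, hc⟩ := hdvd
    have hcomp : dK.comp (X ^ q) = dK * c.map f := by
      rw [hdKdef, show (X ^ q : K[X]) = (X ^ q : L[X]).map f by simp,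
        ← Polynomial.map_comp, hc, Polynomial.map_mul]
    have hz : dK.eval (μ ^ q) = 0 := by
      have := congrArg (Polynomial.eval μ) hcomp
      simpa [eval_comp, hμ0] using this
    exact (mem_roots hdK0).mpr hz
  set S := dK.roots.toFinset with hS
  -- every root is a root of unity
  have hrou : ∀ μ : K, μ ∈ S → ∃ n : ℕ, 0 < n ∧ μ ^ n = 1 := by
    intro μ hμF
    have hμ : μ ∈ dK.roots := Multiset.mem_toFinset.mp hμF
    have hiter : ∀ k : ℕ, μ ^ q ^ k ∈ S := by
      intro k
      induction k with
      | zero => simpa using hμF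
      | succ k ih =>
        have hmem : (μ ^ q ^ k) ^ q ∈ dK.roots := hstab _ (Multiset.mem_toFinset.mp ih)
        rw [← pow_mul, ← pow_succ] at hmem
        exact Multiset.mem_toFinset.mpr hmem
    obtain ⟨i, j, hne, hij⟩ := Finite.exists_ne_map_eq_of_infinite
      (fun k : ℕ => (⟨μ ^ q ^ k, hiter k⟩ : {x // x ∈ S}))
    have heq : μ ^ q ^ i = μ ^ q ^ j := by
      simpa using congrArg Subtype.val hij
    wlog hlt : i < j generalizing i j
    · exact this j i hne.symm hij.symm heq.symm (by omega)
    have hqlt : q ^ i < q ^ j := Nat.pow_lt_pow_right (by omega) hlt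
    refine ⟨q ^ j - q ^ i, by omega, ?_⟩
    have hμ0 : μ ≠ 0 := hnz μ hμ
    have hcancel : μ ^ q ^ i * μ ^ (q ^ j - q ^ i) = μ ^ q ^ i * 1 := by
      rw [mul_one, ← pow_add, heq]
      congr 1
      omega
    exact mul_left_cancel₀ (pow_ne_zero _ hμ0) hcancel
  choose nf hnfpos hnfpow using hrou
  set N : ℕ := ∏ μ ∈ S.attach, nf μ.1 μ.2 with hN
  have hNpos : 0 < N := Finset.prod_pos fun μ _ => hnfpos μ.1 μ.2
  have hpowN : ∀ μ ∈ dK.roots, μ ^ N = 1 := by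
    intro μ hμ
    have hμF : μ ∈ S := Multiset.mem_toFinset.mpr hμ
    have hdvdN : nf μ hμF ∣ N := Finset.dvd_prod_of_mem _ (Finset.mem_attach S ⟨μ, hμF⟩)
    obtain ⟨c, hc⟩ := hdvdN
    rw [hc, pow_mul, hnfpow μ hμF, one_pow]
  -- dK divides (X^N - 1)^natDegree
  have hfac : dK = (dK.roots.map fun μ => X - C μ).prod :=
    hsplit.eq_prod_roots_of_monic hdKmonic
  have hdvdK : dK ∣ ((X : K[X]) ^ N - 1) ^ d.natDegree := by
    have hcard : Multiset.card dK.roots = d.natDegree := by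
      rw [splits_iff_card_roots.mp hsplit, hdKdef, natDegree_map]
    calc dK = (dK.roots.map fun μ => X - C μ).prod := hfac
      _ ∣ (dK.roots.map fun _ => (X : K[X]) ^ N - 1).prod := by
          refine Multiset.prod_dvd_prod_of_dvd _ _ ?_
          intro μ hμ
          rw [dvd_iff_isRoot]
          simp [IsRoot, hpowN μ hμ]
      _ = ((X : K[X]) ^ N - 1) ^ d.natDegree := by
          rw [Multiset.map_const', Multiset.prod_replicate, hcard]
  refine ⟨N, hNpos, ?_⟩
  rw [← map_dvd_map f hinj hmonic, ← hdKdef]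
  convert hdvdK using 1
  simp [Polynomial.map_pow, Polynomial.map_sub]
end

section
/- Let L be a field and V a finite-dimensional L-vector space with automorphisms φ, ψ ∈ GL(V) satisfying ψ ∘ φ ∘ ψ⁻¹ = φ^q for some integer q ≥ 2. Then there exist positive integers N and N' such that (φ^N − id_V)^{N'} = 0 in End_L(V). -/
open Polynomial

lemma aeval_conj_unit {L A : Type*} [Field L] [Ring A] [Algebra L A]
    (u : Aˣ) (a : A) (p : L[X]) :
    aeval ((u : A) * a * (↑u⁻¹ : A)) p = (u : A) * aeval a p * (↑u⁻¹ : A) := by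
  induction p using Polynomial.induction_on with
  | C c => simp [Algebra.algebraMap_eq_smul_one, mul_smul_comm, smul_mul_assoc]
  | add p q hp hq => simp [hp, hq, mul_add, add_mul]
  | monomial n c _ =>
      simp [Units.conj_pow, Algebra.algebraMap_eq_smul_one, smul_mul_assoc, mul_smul_comm]

/-- If `V` is a finite-dimensional vector space over a field `L` and `φ, ψ` are
automorphisms of `V` with `ψ ∘ φ ∘ ψ⁻¹ = φ^q` for some integer `q ≥ 2`, then
`(φ^N − id)^N' = 0` in `End_L(V)` for some positive integers `N, N'`. -/
theorem pow_sub_one_nilpotent_of_conj_pow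
    (L : Type*) [Field L]
    (V : Type*) [AddCommGroup V] [Module L V] [FiniteDimensional L V]
    (φ ψ : V ≃ₗ[L] V) (q : ℕ) (hq : 2 ≤ q)
    (hconj : ψ * φ * ψ⁻¹ = φ ^ q) :
    ∃ N N' : ℕ, 0 < N ∧ 0 < N' ∧
      ((φ : Module.End L V) ^ N - 1) ^ N' = 0 := by
  rcases subsingleton_or_nontrivial V with hV | hV
  · exact ⟨1, 1, one_pos, one_pos, Subsingleton.elim _ _⟩
  classical
  set E : (V ≃ₗ[L] V) →* Module.End L V :=
    LinearEquiv.automorphismGroup.toLinearMapMonoidHom with hE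
  set f : Module.End L V := E φ with hf
  have hfφ : f = (φ : Module.End L V) := rfl
  -- ψ as a unit of End
  set u : (Module.End L V)ˣ :=
    ⟨E ψ, E ψ⁻¹, by rw [← map_mul, mul_inv_cancel, map_one],
      by rw [← map_mul, inv_mul_cancel, map_one]⟩ with hu
  have hfq : (u : Module.End L V) * f * (↑u⁻¹ : Module.End L V) = f ^ q := by
    show E ψ * E φ * E ψ⁻¹ = f ^ q
    rw [hf, ← map_pow, ← hconj, map_mul, map_mul]
  have hint : IsIntegral L f := Algebra.IsIntegral.isIntegral f
  set m : L[X] := minpoly L f with hm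
  have hmonic : m.Monic := minpoly.monic hint
  have hm0 : m ≠ 0 := hmonic.ne_zero
  have haev : aeval f m = 0 := minpoly.aeval L f
  have hd : 0 < m.natDegree := minpoly.natDegree_pos hint
  -- m divides m.comp (X^q)
  have hdvd : m ∣ m.comp (X ^ q) := by
    apply minpoly.dvd
    rw [aeval_comp]
    simp only [map_pow, aeval_X]
    rw [← hfq, aeval_conj_unit, haev, mul_zero, zero_mul]
  -- constant coefficient nonzero
  have hc0 : m.coeff 0 ≠ 0 := by
    intro h0
    obtain ⟨g, hg⟩ := (X_dvd_iff).2 h0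
    have hgne : g ≠ 0 := by rintro rfl; simp at hg; exact hm0 (by simp [hg])
    have : aeval f g = 0 := by
      have h1 : f * aeval f g = 0 := by
        have := haev
        rw [hg] at this
        simpa using this
      have h2 : E φ⁻¹ * (f * aeval f g) = 0 := by
        rw [h1, mul_zero]
      rwa [← mul_assoc, show E φ⁻¹ * f = 1 by rw [hf, ← map_mul, inv_mul_cancel, map_one],
        one_mul] at h2
    have hdvd' : m ∣ g := minpoly.dvd L f this
    have := natDegree_le_of_dvd hdvd' hgne
    rw [hg, natDegree_mul X_ne_zero hgne, natDegree_X] at this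
    omega
  -- pass to the algebraic closure
  set K := AlgebraicClosure L
  set M : K[X] := m.map (algebraMap L K) with hM
  have hinj : Function.Injective (algebraMap L K) := (algebraMap L K).injective
  have hMne : M ≠ 0 := by
    simpa [hM] using (Polynomial.map_ne_zero_iff hinj).mpr hm0
  have hMd : M.natDegree = m.natDegree := natDegree_map_eq_of_injective hinj m
  -- roots of M are stable under q-th power
  have hstab : ∀ r ∈ M.roots, r ^ q ∈ M.roots := by
    intro r hr
    have hr' : M.IsRoot r := isRoot_of_mem_roots hr
    have hdvdK : M ∣ M.comp (X ^ q) := by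
      have := Polynomial.map_dvd (algebraMap L K) hdvd
      simpa [hM, Polynomial.map_comp] using this
    obtain ⟨c, hc⟩ := hdvdK
    have : M.IsRoot (r ^ q) := by
      have := congrArg (eval r) hc
      rw [eval_comp] at this
      simp only [eval_pow, eval_X, eval_mul] at this
      simp [IsRoot, this, hr'.eq_zero]
    exact mem_roots'.2 ⟨hMne, this⟩
  -- roots are nonzero
  have hnz : ∀ r ∈ M.roots, r ≠ 0 := by
    rintro r hr rfl
    have : M.coeff 0 = 0 := by
      have := (isRoot_of_mem_roots hr).eq_zero
      simpa [coeff_zero_eq_eval_zero] using this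
    rw [hM, coeff_map] at this
    exact hc0 (hinj (by simpa using this))
  -- every root is a root of unity
  have hunity : ∀ r ∈ M.roots, ∃ n : ℕ, 0 < n ∧ r ^ n = 1 := by
    intro r hr
    have horb : ∀ k : ℕ, r ^ q ^ k ∈ M.roots := by
      intro k
      induction k with
      | zero => simpa using hr
      | succ k ih => rw [pow_succ, pow_mul]; exact hstab _ ih
    obtain ⟨i, j, hne, hij'⟩ := Finite.exists_ne_map_eq_of_infinite
      (fun k : ℕ => (⟨r ^ q ^ k, by simpa using horb k⟩ : M.roots.toFinset))
    have heq : r ^ q ^ i = r ^ q ^ j := by simpa using congrArg Subtype.val hij'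
    clear hij'
    wlog hij : i < j generalizing i j
    · exact this j i hne.symm heq.symm (by omega)
    refine ⟨q ^ j - q ^ i, ?_, ?_⟩
    · have : q ^ i < q ^ j := Nat.pow_lt_pow_right (by omega) hij
      omega
    · have hqle : q ^ i ≤ q ^ j := Nat.pow_le_pow_right (by omega) hij.le
      have hrne : r ≠ 0 := hnz r hr
      have h2 : r ^ (q ^ j - q ^ i) * r ^ q ^ i = 1 * r ^ q ^ i := by
        rw [← pow_add, Nat.sub_add_cancel hqle, one_mul, heq]
      exact mul_right_cancel₀ (pow_ne_zero _ hrne) h2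
  -- choose N with r ^ N = 1 for all roots r
  have hchoice : ∀ r : K, ∃ n : ℕ, (r ∈ M.roots → r ^ n = 1) ∧ 0 < n := by
    intro r
    by_cases hr : r ∈ M.roots
    · obtain ⟨n, hn, h1⟩ := hunity r hr; exact ⟨n, fun _ => h1, hn⟩
    · exact ⟨1, fun h => absurd h hr, one_pos⟩
  choose g hg hgpos using hchoice
  set N := ∏ r ∈ M.roots.toFinset, g r with hN
  have hNpos : 0 < N := Finset.prod_pos fun r _ => hgpos r
  have hrootN : ∀ r ∈ M.roots, r ^ N = 1 := by
    intro r hr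
    obtain ⟨c, hc⟩ := Finset.dvd_prod_of_mem g (Multiset.mem_toFinset.2 hr)
    calc r ^ N = (r ^ g r) ^ c := by rw [hN, hc, pow_mul]
    _ = 1 := by rw [hg r hr, one_pow]
  set d := m.natDegree with hd'
  have hXN : ((X : K[X]) ^ N - 1).Monic := by
    simpa using monic_X_pow_sub_C (1 : K) hNpos.ne'
  -- M divides (X^N - 1)^d over K
  have hMdvd : M ∣ ((X : K[X]) ^ N - 1) ^ d := by
    have hQne : (((X : K[X]) ^ N - 1) ^ d) ≠ 0 := pow_ne_zero _ hXN.ne_zero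
    have hle : M.roots ≤ (((X : K[X]) ^ N - 1) ^ d).roots := by
      rw [Multiset.le_iff_count]
      intro r
      by_cases hr : r ∈ M.roots
      · have h1 : M.roots.count r ≤ d := le_trans (Multiset.count_le_card _ _)
          (le_trans (card_roots' M) (le_of_eq hMd))
        have h2 : r ∈ ((X : K[X]) ^ N - 1).roots := by
          rw [mem_roots']
          exact ⟨hXN.ne_zero, by simp [IsRoot, hrootN r hr]⟩
        rw [roots_pow, Multiset.count_nsmul]
        calc M.roots.count r ≤ d * 1 := by simpa using h1
        _ ≤ d * (((X : K[X]) ^ N - 1).roots.count r) :=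
          Nat.mul_le_mul_left d (Multiset.one_le_count_iff_mem.2 h2)
      · simp [Multiset.count_eq_zero.2 hr]
    have hdvd1 : (M.roots.map fun a => X - C a).prod ∣ ((X : K[X]) ^ N - 1) ^ d :=
      (Multiset.prod_X_sub_C_dvd_iff_le_roots hQne _).2 hle
    have hsplit : M.Splits := by
      exact IsAlgClosed.splits M
    have hMeq : M = (M.roots.map fun a => X - C a).prod :=
      hsplit.eq_prod_roots_of_monic (hmonic.map _)
    rw [hMeq]; exact hdvd1
  -- descend the divisibility to L
  have hfin : m ∣ ((X : L[X]) ^ N - 1) ^ d := by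
    rw [← map_dvd_map (algebraMap L K) hinj hmonic]
    simpa [Polynomial.map_pow, Polynomial.map_sub, Polynomial.map_one,
      Polynomial.map_X] using hMdvd
  obtain ⟨c, hc⟩ := hfin
  refine ⟨N, d, hNpos, hd, ?_⟩
  have hz : aeval f (((X : L[X]) ^ N - 1) ^ d) = 0 := by rw [hc, map_mul, haev, zero_mul]
  rw [map_pow, map_sub, map_one, aeval_X_pow] at hz
  rw [← hfφ]
  exact hz
end

section
/- Let A be a complete Noetherian local ring with maximal ideal m, and let h(x) = x^n + b_{n−1}x^{n−1} + ⋯ + b_0 ∈ A[x] be a monic polynomial of degree n ≥ 1 all of whose non-leading coefficients b_i lie in m. Then the quotient A⟦x⟧/(h(x)) of the power series ring is a free A-module of rank n, with basis given by the images of 1, x, …, x^{n−1}. -/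
open PowerSeries

section Aux

variable {A : Type*} [CommRing A]

lemma WD.mem_smul_top (I : Ideal A) (x : A) :
    x ∈ (I • ⊤ : Submodule A A) ↔ x ∈ I := by
  rw [smul_eq_mul, Ideal.mul_top]

lemma WD.coeff_mul_mem (I J : Ideal A) (b g : PowerSeries A)
    (hb : ∀ k, PowerSeries.coeff (R := A) k b ∈ I) (hg : ∀ k, PowerSeries.coeff (R := A) k g ∈ J) :
    ∀ k, PowerSeries.coeff (R := A) k (b * g) ∈ I * J := by
  intro k
  rw [PowerSeries.coeff_mul]
  exact Ideal.sum_mem _ fun p _ => Ideal.mul_mem_mul (hb _) (hg _)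

/-- Uniqueness part of Weierstrass division. -/
lemma WD.uniq (I : Ideal A) [IsHausdorff I A] (n : ℕ) (b q : PowerSeries A)
    (hb : ∀ k, PowerSeries.coeff (R := A) k b ∈ I)
    (hq : ∀ d, PowerSeries.coeff (R := A) d q = PowerSeries.coeff (R := A) (d + n) (b * q)) :
    q = 0 := by
  have key : ∀ c k, PowerSeries.coeff (R := A) k q ∈ I ^ c := by
    intro c
    induction c with
    | zero => intro k; simp [Ideal.one_eq_top]
    | succ c ih =>
      intro k
      rw [hq k, pow_succ']
      exact WD.coeff_mul_mem I (I ^ c) b q hb ih _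
  ext k
  simp only [map_zero]
  refine IsHausdorff.haus (inferInstance : IsHausdorff I A) _ fun c => ?_
  rw [SModEq.zero, WD.mem_smul_top]
  exact key c k

/-- Existence part of Weierstrass division (fixed point construction). -/
lemma WD.exists_q (I : Ideal A) [IsAdicComplete I A] (n : ℕ) (b : PowerSeries A)
    (hb : ∀ k, PowerSeries.coeff (R := A) k b ∈ I) (f : PowerSeries A) :
    ∃ q : PowerSeries A, ∀ d,
      PowerSeries.coeff (R := A) d q
        = PowerSeries.coeff (R := A) (d + n) f + PowerSeries.coeff (R := A) (d + n) (b * q) := by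
  -- iteration
  let Q : ℕ → PowerSeries A := fun j => Nat.rec 0
    (fun _ p => PowerSeries.mk fun d =>
      PowerSeries.coeff (R := A) (d + n) f + PowerSeries.coeff (R := A) (d + n) (b * p)) j
  have hQ : ∀ j d, PowerSeries.coeff (R := A) d (Q (j + 1))
      = PowerSeries.coeff (R := A) (d + n) f + PowerSeries.coeff (R := A) (d + n) (b * Q j) := by
    intro j d; simp [Q, PowerSeries.coeff_mk]
  have step : ∀ j k, PowerSeries.coeff (R := A) k (Q (j + 1) - Q j) ∈ I ^ j := by
    intro j
    induction j with
    | zero => intro k; simp [Ideal.one_eq_top]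
    | succ j ih =>
      intro k
      have e1 : PowerSeries.coeff (R := A) k (Q (j + 2))
          = PowerSeries.coeff (R := A) (k + n) f + PowerSeries.coeff (R := A) (k + n) (b * Q (j + 1)) :=
        hQ (j + 1) k
      have : PowerSeries.coeff (R := A) k (Q (j + 2) - Q (j + 1))
          = PowerSeries.coeff (R := A) (k + n) (b * (Q (j + 1) - Q j)) := by
        rw [map_sub, e1, hQ j k, mul_sub, map_sub]; ring
      rw [this, pow_succ']
      exact WD.coeff_mul_mem I (I ^ j) b _ hb ih _
  have cauchy : ∀ i j, i ≤ j → ∀ k,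
      PowerSeries.coeff (R := A) k (Q i) - PowerSeries.coeff (R := A) k (Q j) ∈ I ^ i := by
    intro i j hij
    induction j, hij using Nat.le_induction with
    | base => intro k; simp
    | succ j hij ih =>
      intro k
      have h1 : PowerSeries.coeff (R := A) k (Q i) - PowerSeries.coeff (R := A) k (Q (j + 1))
          = (PowerSeries.coeff (R := A) k (Q i) - PowerSeries.coeff (R := A) k (Q j))
            - PowerSeries.coeff (R := A) k (Q (j + 1) - Q j) := by
        rw [map_sub]; ring
      rw [h1]
      exact Submodule.sub_mem _ (ih k) (Ideal.pow_le_pow_right hij (step j k))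
  -- limits of each coefficient sequence
  have hL : ∀ k, ∃ L : A, ∀ c,
      PowerSeries.coeff (R := A) k (Q c) - L ∈ I ^ c := by
    intro k
    obtain ⟨L, hL⟩ := IsPrecomplete.prec (inferInstance : IsPrecomplete I A)
      (f := fun j => PowerSeries.coeff (R := A) k (Q j))
      (fun {i j} hij => by
        rw [SModEq.sub_mem, WD.mem_smul_top]; exact cauchy i j hij k)
    exact ⟨L, fun c => by
      have := hL c; rw [SModEq.sub_mem, WD.mem_smul_top] at this; exact this⟩
  choose L hLspec using hL
  refine ⟨PowerSeries.mk L, fun d => ?_⟩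
  rw [← sub_eq_zero]
  refine IsHausdorff.haus (inferInstance : IsHausdorff I A) _ fun c => ?_
  rw [SModEq.zero, WD.mem_smul_top]
  have h1 : PowerSeries.coeff (R := A) d (PowerSeries.mk L) - PowerSeries.coeff (R := A) d (Q (c + 1))
      ∈ I ^ c := by
    have := hLspec d (c + 1)
    have h2 := Ideal.pow_le_pow_right (Nat.le_succ c) (neg_mem this)
    simpa using h2
  have h2 : PowerSeries.coeff (R := A) (d + n) (b * (Q c - PowerSeries.mk L)) ∈ I ^ c := by
    have hgm : ∀ k, PowerSeries.coeff (R := A) k (Q c - PowerSeries.mk L) ∈ I ^ c := by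
      intro k; rw [map_sub]; simpa using hLspec k c
    have := WD.coeff_mul_mem I (I ^ c) b _ hb hgm (d + n)
    exact Ideal.mul_le_right this
  have key : PowerSeries.coeff (R := A) d (PowerSeries.mk L)
      - (PowerSeries.coeff (R := A) (d + n) f
        + PowerSeries.coeff (R := A) (d + n) (b * PowerSeries.mk L))
      = (PowerSeries.coeff (R := A) d (PowerSeries.mk L) - PowerSeries.coeff (R := A) d (Q (c + 1)))
        + PowerSeries.coeff (R := A) (d + n) (b * (Q c - PowerSeries.mk L)) := by
    rw [hQ, mul_sub, map_sub]; ring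
  rw [key]
  exact Submodule.add_mem _ h1 h2

/-- coefficients of `∑ i : Fin n, C (a i) * X ^ i`. -/
lemma WD.coeff_sum_lt (n : ℕ) (a : Fin n → A) (k : ℕ) (hk : k < n) :
    PowerSeries.coeff (R := A) k (∑ i : Fin n, PowerSeries.C (R := A) (a i) * PowerSeries.X ^ (i : ℕ))
      = a ⟨k, hk⟩ := by
  rw [map_sum]
  rw [Finset.sum_eq_single (⟨k, hk⟩ : Fin n)]
  · simp [PowerSeries.coeff_X_pow]
  · intro i _ hi
    have : k ≠ (i : ℕ) := fun hki => hi (by ext; simp [hki.symm])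
    simp [PowerSeries.coeff_X_pow, this]
  · simp
lemma WD.coeff_sum_ge (n : ℕ) (a : Fin n → A) (k : ℕ) (hk : n ≤ k) :
    PowerSeries.coeff (R := A) k (∑ i : Fin n, PowerSeries.C (R := A) (a i) * PowerSeries.X ^ (i : ℕ))
      = 0 := by
  rw [map_sum]
  refine Finset.sum_eq_zero fun i _ => ?_
  have : k ≠ (i : ℕ) := by omega
  simp [PowerSeries.coeff_X_pow, this]

end Aux

/-- Weierstrass division consequence: if `A` is a complete Noetherian local ring and
`h ∈ A[x]` is a monic polynomial of degree `n ≥ 1` all of whose non-leading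
coefficients lie in the maximal ideal, then `A⟦x⟧/(h)` is a free `A`-module of rank
`n` with basis the images of `1, x, …, x^(n−1)`. -/
theorem quotient_powerSeries_by_distinguished_poly_basis
    (A : Type*) [CommRing A] [IsNoetherianRing A] [IsLocalRing A]
    [IsAdicComplete (IsLocalRing.maximalIdeal A) A]
    (n : ℕ) (hn : 1 ≤ n)
    (h : Polynomial A) (hmonic : h.Monic) (hdeg : h.natDegree = n)
    (hcoeff : ∀ i < n, h.coeff i ∈ IsLocalRing.maximalIdeal A) :
    LinearIndependent A
        (fun i : Fin n =>
          Ideal.Quotient.mk (Ideal.span {(h : PowerSeries A)})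
            ((PowerSeries.X : PowerSeries A) ^ (i : ℕ))) ∧
      Submodule.span A
          (Set.range fun i : Fin n =>
            Ideal.Quotient.mk (Ideal.span {(h : PowerSeries A)})
              ((PowerSeries.X : PowerSeries A) ^ (i : ℕ))) = ⊤ := by
  set m := IsLocalRing.maximalIdeal A with hm
  set b : PowerSeries A := (PowerSeries.X : PowerSeries A) ^ n - (h : PowerSeries A) with hbdef
  have hhb : (h : PowerSeries A) = PowerSeries.X ^ n - b := by rw [hbdef]; ring
  have hb : ∀ k, PowerSeries.coeff (R := A) k b ∈ m := by
    intro k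
    rw [hbdef, map_sub, PowerSeries.coeff_X_pow, Polynomial.coeff_coe]
    rcases lt_trichotomy k n with hk | hk | hk
    · rw [if_neg hk.ne]
      simpa using neg_mem (hcoeff k hk)
    · subst hk
      rw [if_pos rfl, ← hdeg, hmonic.coeff_natDegree]
      simp
    · rw [if_neg hk.ne', Polynomial.coeff_eq_zero_of_natDegree_lt (by omega)]
      simp
  set J := Ideal.span {(h : PowerSeries A)} with hJ
  have smul_mk : ∀ (a : A) (p : PowerSeries A),
      a • Ideal.Quotient.mk J p = Ideal.Quotient.mk J (PowerSeries.C (R := A) a * p) := by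
    intro a p
    rw [← PowerSeries.smul_eq_C_mul, ← Ideal.Quotient.mkₐ_eq_mk A J, map_smul]
  constructor
  · -- linear independence
    rw [Fintype.linearIndependent_iff]
    intro g hg i
    set P : PowerSeries A :=
      ∑ i : Fin n, PowerSeries.C (R := A) (g i) * PowerSeries.X ^ (i : ℕ) with hP
    have hgP : Ideal.Quotient.mk J P = 0 := by
      rw [hP, map_sum, ← hg]
      exact Finset.sum_congr rfl fun i _ => (smul_mk _ _).symm
    rw [Ideal.Quotient.eq_zero_iff_mem, hJ, Ideal.mem_span_singleton'] at hgP
    obtain ⟨q, hq⟩ := hgP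
    have hq' : ∀ d, PowerSeries.coeff (R := A) d q = PowerSeries.coeff (R := A) (d + n) (b * q) := by
      intro d
      have h0 : PowerSeries.coeff (R := A) (d + n) P = 0 := WD.coeff_sum_ge n g (d + n) (by omega)
      have := congrArg (PowerSeries.coeff (R := A) (d + n)) hq
      rw [h0, hhb, mul_sub, map_sub, PowerSeries.coeff_mul_X_pow, sub_eq_zero] at this
      rw [this, mul_comm]
    have hq0 : q = 0 := WD.uniq m n b q hb hq'
    have hP0 : P = 0 := by rw [← hq, hq0, zero_mul]
    have := WD.coeff_sum_lt n g (i : ℕ) i.isLt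
    rw [← hP, hP0, map_zero] at this
    rw [← this]
  · -- spanning
    rw [eq_top_iff]
    rintro x -
    obtain ⟨f, rfl⟩ := Ideal.Quotient.mk_surjective x
    obtain ⟨q, hq⟩ := WD.exists_q m n b hb f
    set r : PowerSeries A := f - q * h with hr
    have hrc : ∀ d, PowerSeries.coeff (R := A) (d + n) r = 0 := by
      intro d
      rw [hr, map_sub, hhb, mul_sub, map_sub, PowerSeries.coeff_mul_X_pow, hq d,
        mul_comm q b]
      ring
    have hmkr : Ideal.Quotient.mk J f = Ideal.Quotient.mk J r := by
      rw [Ideal.Quotient.mk_eq_mk_iff_sub_mem]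
      have : f - r = q * h := by rw [hr]; ring
      rw [this, hJ]
      exact Ideal.mul_mem_left _ _ (Ideal.subset_span rfl)
    have hrsum : r = ∑ i : Fin n,
        PowerSeries.C (R := A) (PowerSeries.coeff (R := A) (i : ℕ) r) * PowerSeries.X ^ (i : ℕ) := by
      ext k
      rcases lt_or_ge k n with hk | hk
      · rw [WD.coeff_sum_lt n _ k hk]
      · rw [WD.coeff_sum_ge n _ k hk]
        obtain ⟨d, rfl⟩ : ∃ d, k = d + n := ⟨k - n, by omega⟩
        exact hrc d
    rw [hmkr, hrsum, map_sum]
    refine Submodule.sum_mem _ fun i _ => ?_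
    rw [← smul_mk]
    exact Submodule.smul_mem _ _ (Submodule.subset_span ⟨i, rfl⟩)
end
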